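/- arXiv:0902.1910 — 3 statements merged into one kernel-verified Lean document; each statement's English description precedes it below -/
import Mathlib

section
/- Let p, q be coprime integers with p ≠ 0, let t ∈ ℝ with t ≠ 0, and let v = t·(p,q). Then the set { s ∈ ℝ : there exists γ ∈ SL(2,ℤ) with γ·σ(v) = σ(v)·u(s) } is exactly (1/t²)·ℤ = { k/t² : k ∈ ℤ }. -/
open Matrix MeasureTheory Filter Topology

noncomputable section

abbrev SL2Z := Matrix.SpecialLinearGroup (Fin 2) ℤ

/-- The real matrix associated to an element of `SL(2,ℤ)`. -/
def toR (γ : SL2Z) : Matrix (Fin 2) (Fin 2) ℝ :=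
  (γ : Matrix (Fin 2) (Fin 2) ℤ).map (Int.cast)

/-- The Euclidean plane. -/
abbrev E2 := EuclideanSpace ℝ (Fin 2)

/-- The vector of `ℝ²` with coordinates `a`, `b`. -/
def vec (a b : ℝ) : E2 := (WithLp.equiv 2 (Fin 2 → ℝ)).symm ![a, b]

/-- The action of `SL(2,ℤ)` on `ℝ²` by matrix-vector multiplication. -/
def act (γ : SL2Z) (v : E2) : E2 :=
  (WithLp.equiv 2 (Fin 2 → ℝ)).symm ((toR γ).mulVec (WithLp.equiv 2 (Fin 2 → ℝ) v))

/-- The Frobenius (euclidean) norm of a 2×2 real matrix. -/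
def frobNorm (A : Matrix (Fin 2) (Fin 2) ℝ) : ℝ := Real.sqrt (∑ i, ∑ j, (A i j) ^ 2)

/-- A vector of `ℝ²` is primitive if its coordinates are coprime integers. -/
def IsPrimitive (v : E2) : Prop := ∃ p q : ℤ, Int.gcd p q = 1 ∧ v 0 = p ∧ v 1 = q

/-- The set of points of rational slope and period `ρ`: points `v` such that `√ρ • v`
is primitive. -/
def P (ρ : ℝ) : Set E2 := {v | IsPrimitive (Real.sqrt ρ • v)}

/-- The spectrum of periods of `v`: the euclidean distance from `v` to `P ρ`. -/
def Dv (v : E2) (ρ : ℝ) : ℝ := Metric.infDist v (P ρ)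

/-- The unipotent matrix `u(s) = [[1, s], [0, 1]]`. -/
def uMat (s : ℝ) : Matrix (Fin 2) (Fin 2) ℝ := !![1, s; 0, 1]

/-- The section `σ(a, b) = [[a, 0], [b, a⁻¹]]`. -/
def σMat (a b : ℝ) : Matrix (Fin 2) (Fin 2) ℝ := !![a, 0; b, a⁻¹]

/-- For `v = t·(p,q)` with `p, q` coprime, `p ≠ 0`, `t ≠ 0`, the set of real `s` such that
`γ·σ(v) = σ(v)·u(s)` for some `γ ∈ SL(2,ℤ)` is exactly `(1/t²)·ℤ`. -/
theorem period_set_eq (p q : ℤ) (hpq : Int.gcd p q = 1) (hp : p ≠ 0) (t : ℝ) (ht : t ≠ 0) :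
    {s : ℝ | ∃ γ : SL2Z, toR γ * σMat (t * p) (t * q) = σMat (t * p) (t * q) * uMat s}
      = {s : ℝ | ∃ k : ℤ, s = k / t ^ 2} := by
  have hpR : ((p:ℝ)) ≠ 0 := Int.cast_ne_zero.mpr hp
  have ha : (t * (p:ℝ)) ≠ 0 := mul_ne_zero ht hpR
  have ht2 : (t : ℝ) ^ 2 ≠ 0 := pow_ne_zero 2 ht
  ext s
  simp only [Set.mem_setOf_eq]
  constructor
  · rintro ⟨γ, h⟩
    have h01 := congrFun (congrFun h 0) 1
    have h10 := congrFun (congrFun h 1) 0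
    have h11 := congrFun (congrFun h 1) 1
    simp [toR, σMat, uMat, Matrix.mul_apply, Fin.sum_univ_two] at h01 h10 h11
    field_simp at h01 h10 h11
    -- h01 : ↑(γ 0 1) = t * p * s * (p * t)
    -- h11 : ↑(γ 1 1) = t * q * s * (p * t) + 1
    -- h10 : ↑(γ 1 0) * (t * p) + ↑(γ 1 1) * (t * q) = t * q
    have hg10 : ((γ : Matrix (Fin 2) (Fin 2) ℤ) 1 0 : ℝ) = -((t * q) ^ 2) * s := by
      refine mul_right_cancel₀ ha ?_
      have : ((γ : Matrix (Fin 2) (Fin 2) ℤ) 1 0 : ℝ) * (t * p)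
          = t * q - (t * (q:ℝ) * s * ((p:ℝ) * t) + 1) * (t * q) := by
        linear_combination t * h10 - (t * (q:ℝ)) * h11
      rw [this]; ring
    have hc : IsCoprime (p ^ 2) (q ^ 2) := (Int.isCoprime_iff_gcd_eq_one.mpr hpq).pow
    obtain ⟨x, y, hxy⟩ := hc
    have hxyR : (x : ℝ) * (p:ℝ) ^ 2 + (y:ℝ) * (q:ℝ) ^ 2 = 1 := by
      have := congrArg (fun z : ℤ => (z : ℝ)) hxy
      push_cast at this
      linarith
    refine ⟨x * (γ : Matrix (Fin 2) (Fin 2) ℤ) 0 1 - y * (γ : Matrix (Fin 2) (Fin 2) ℤ) 1 0, ?_⟩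
    have key : ((x * (γ : Matrix (Fin 2) (Fin 2) ℤ) 0 1
        - y * (γ : Matrix (Fin 2) (Fin 2) ℤ) 1 0 : ℤ) : ℝ) = t ^ 2 * s := by
      push_cast
      rw [h01, hg10]
      have : (x:ℝ) * (t * (p:ℝ) * s * ((p:ℝ) * t)) - (y:ℝ) * (-((t * (q:ℝ)) ^ 2) * s)
          = t ^ 2 * s * ((x:ℝ) * (p:ℝ) ^ 2 + (y:ℝ) * (q:ℝ) ^ 2) := by ring
      linear_combination (t ^ 2 * s) * hxyR
    rw [eq_div_iff ht2, key]; ring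
  · rintro ⟨k, rfl⟩
    refine ⟨⟨!![1 - p * q * k, p ^ 2 * k; -(q ^ 2) * k, 1 + p * q * k], ?_⟩, ?_⟩
    · simp [Matrix.det_fin_two]; ring
    · ext i j
      fin_cases i <;> fin_cases j
      all_goals simp [toR, σMat, uMat, Matrix.mul_apply, Fin.sum_univ_two]
      · ring
      · field_simp
      · ring
      · field_simp; ring
end
end

section
/- Let p, q be coprime integers with p ≠ 0, let t ∈ ℝ with t ≠ 0, and let v = t·(p,q). Then the least positive real number s such that there exists γ ∈ SL(2,ℤ) with γ·σ(v) = σ(v)·u(s) is s = 1/t². (This least positive s is called the period ρ(v) of v.) -/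
open Matrix MeasureTheory Filter Topology

noncomputable section

/-- For `v = t·(p,q)` with `p, q` coprime, `p ≠ 0`, `t ≠ 0`, the least positive real `s`
such that `γ·σ(v) = σ(v)·u(s)` for some `γ ∈ SL(2,ℤ)` is `1/t²` (the period of `v`). -/
theorem period_eq (p q : ℤ) (hpq : Int.gcd p q = 1) (hp : p ≠ 0) (t : ℝ) (ht : t ≠ 0) :
    IsLeast {s : ℝ | 0 < s ∧
        ∃ γ : SL2Z, toR γ * σMat (t * p) (t * q) = σMat (t * p) (t * q) * uMat s}
      (1 / t ^ 2) := by
  have hpR : (p : ℝ) ≠ 0 := Int.cast_ne_zero.mpr hp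
  have ha : t * p ≠ 0 := mul_ne_zero ht hpR
  constructor
  · refine ⟨by positivity, ⟨!![1 - p*q, p^2; -q^2, 1 + p*q], ?_⟩, ?_⟩
    · simp [Matrix.det_fin_two_of]; ring
    · ext i j
      fin_cases i <;> fin_cases j <;>
        simp [toR, σMat, uMat, Matrix.mul_apply, Fin.sum_univ_two] <;>
        first
        | ring1
        | (field_simp <;> ring)
  · rintro s ⟨hs, γ, hγ⟩
    have h01 := congr_fun (congr_fun hγ 0) 1
    have h11 := congr_fun (congr_fun hγ 1) 1
    have h10 := congr_fun (congr_fun hγ 1) 0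
    simp [toR, σMat, uMat, Matrix.mul_apply, Fin.sum_univ_two] at h01 h11 h10
    have hm : ((γ.1 0 1 : ℤ) : ℝ) = t^2 * p^2 * s := by
      field_simp at h01
      linear_combination h01
    have hg11 : ((γ.1 1 1 : ℤ) : ℝ) = t^2 * (p*q) * s + 1 := by
      field_simp at h11
      linear_combination h11
    have hn : ((γ.1 1 0 : ℤ) : ℝ) = -(t^2 * q^2 * s) := by
      refine mul_right_cancel₀ ha ?_
      linear_combination h10 - (t * (q:ℝ)) * hg11
    obtain ⟨x, y, hxy⟩ : IsCoprime (p^2) (q^2) :=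
      IsCoprime.pow (Int.isCoprime_iff_gcd_eq_one.mpr hpq)
    have hxyR : (x : ℝ) * p^2 + y * q^2 = 1 := by exact_mod_cast congrArg (Int.cast : ℤ → ℝ) hxy
    have hk : ((x * γ.1 0 1 - y * γ.1 1 0 : ℤ) : ℝ) = t^2 * s := by
      push_cast
      rw [hm, hn]
      linear_combination t^2 * s * hxyR
    have hkpos : 0 < (x * γ.1 0 1 - y * γ.1 1 0 : ℤ) := by
      have h : (0:ℝ) < ((x * γ.1 0 1 - y * γ.1 1 0 : ℤ) : ℝ) := by
        rw [hk]; positivity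
      exact_mod_cast h
    have h1 : (1:ℝ) ≤ t^2 * s := by
      rw [← hk]
      exact_mod_cast hkpos
    rw [div_le_iff₀ (by positivity : (0:ℝ) < t^2)]
    nlinarith
end
end

section
/- Let v ∈ ℝ², let w ∈ ℝ² be a nonzero vector of rational slope with period ρ(w) = h(w)²/|w|², let T > 0, and let γ ∈ SL(2,ℤ) with ‖γ‖ ≤ T. Then |γ·v − w| ≥ D_v(ρ(w))/T. -/
open Matrix MeasureTheory Filter Topology

noncomputable section

lemma act_apply (γ : SL2Z) (x : E2) (i : Fin 2) :
    act γ x i = toR γ i 0 * x 0 + toR γ i 1 * x 1 := by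
  have : act γ x i = ((toR γ).mulVec (fun j => x j)) i := rfl
  rw [this]
  simp [Matrix.mulVec, dotProduct, Fin.sum_univ_two]

lemma toR_apply (γ : SL2Z) (i j : Fin 2) :
    toR γ i j = ((γ : Matrix (Fin 2) (Fin 2) ℤ) i j : ℝ) := rfl

lemma norm_E2 (x : E2) : ‖x‖ = Real.sqrt (x 0 ^ 2 + x 1 ^ 2) := by
  rw [EuclideanSpace.norm_eq]
  simp [Fin.sum_univ_two, sq_abs]

lemma smul_apply' (c : ℝ) (x : E2) (i : Fin 2) : (c • x) i = c * x i := rfl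

lemma sub_apply' (x y : E2) (i : Fin 2) : (x - y) i = x i - y i := rfl

lemma vec_zero (a b : ℝ) : vec a b 0 = a := rfl
lemma vec_one (a b : ℝ) : vec a b 1 = b := rfl

lemma act_sub (γ : SL2Z) (x y : E2) : act γ x - act γ y = act γ (x - y) := by
  ext i
  simp [sub_apply', act_apply]
  ring

lemma frobNorm_nonneg (A : Matrix (Fin 2) (Fin 2) ℝ) : 0 ≤ frobNorm A := Real.sqrt_nonneg _

lemma norm_act_le (γ : SL2Z) (u : E2) : ‖act γ u‖ ≤ frobNorm (toR γ) * ‖u‖ := by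
  rw [norm_E2, norm_E2]
  unfold frobNorm
  rw [← Real.sqrt_mul (by positivity)]
  apply Real.sqrt_le_sqrt
  simp only [act_apply, Fin.sum_univ_two]
  nlinarith [sq_nonneg (toR γ 0 0 * u 1 - toR γ 0 1 * u 0),
    sq_nonneg (toR γ 1 0 * u 1 - toR γ 1 1 * u 0), sq_nonneg (u 0), sq_nonneg (u 1),
    sq_nonneg (toR γ 0 0), sq_nonneg (toR γ 1 1)]

lemma toR_mul (γ₁ γ₂ : SL2Z) : toR (γ₁ * γ₂) = toR γ₁ * toR γ₂ := by
  ext i j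
  simp [toR, Matrix.mul_apply, Fin.sum_univ_two]

lemma act_act (γ₁ γ₂ : SL2Z) (x : E2) : act γ₁ (act γ₂ x) = act (γ₁ * γ₂) x := by
  unfold act
  rw [toR_mul]
  simp [Matrix.mulVec_mulVec]
  simp only [Matrix.mul_apply, Fin.sum_univ_two]
  constructor <;> ring

lemma act_one (x : E2) : act 1 x = x := by
  ext i
  rw [act_apply]
  fin_cases i <;> simp [toR_apply]

lemma act_inv_act (γ : SL2Z) (x : E2) : act γ⁻¹ (act γ x) = x := by
  rw [act_act, inv_mul_cancel, act_one]

lemma frob_inv (γ : SL2Z) : frobNorm (toR γ⁻¹) = frobNorm (toR γ) := by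
  rw [Matrix.SpecialLinearGroup.SL2_inv_expl γ]
  unfold frobNorm
  congr 1
  simp [toR, Fin.sum_univ_two, Matrix.map]
  ring

lemma dist_act_le (γ : SL2Z) (x y : E2) :
    dist (act γ x) (act γ y) ≤ frobNorm (toR γ) * dist x y := by
  rw [dist_eq_norm, dist_eq_norm, act_sub]
  exact norm_act_le γ (x - y)

lemma mem_P (t : ℝ) (ht : t ≠ 0) (p q : ℤ) (hpq : Int.gcd p q = 1) (γ : SL2Z) :
    act γ (t • vec (p : ℝ) (q : ℝ)) ∈ P (1 / t ^ 2) := by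
  set M : Matrix (Fin 2) (Fin 2) ℤ := (γ : Matrix (Fin 2) (Fin 2) ℤ) with hM
  set ε : ℤ := if 0 < t then 1 else -1 with hε
  set A : ℤ := M 0 0 * p + M 0 1 * q with hA
  set B : ℤ := M 1 0 * p + M 1 1 * q with hB
  have hsqrt : Real.sqrt (1 / t ^ 2) = |t|⁻¹ := by
    rw [one_div, ← inv_pow, Real.sqrt_sq_eq_abs, abs_inv]
  have hsign : Real.sqrt (1 / t ^ 2) * t = (ε : ℝ) := by
    rw [hsqrt, hε]
    rcases ht.lt_or_gt with h | h
    · rw [abs_of_neg h, if_neg (not_lt.2 h.le)]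
      push_cast
      field_simp
    · rw [abs_of_pos h, if_pos h]
      push_cast
      field_simp
  -- gcd of A B is 1
  have hgcdAB : Int.gcd A B = 1 := by
    set N : Matrix (Fin 2) (Fin 2) ℤ := ((γ⁻¹ : SL2Z) : Matrix (Fin 2) (Fin 2) ℤ) with hN
    have hNM : N * M = 1 := by
      rw [hN, hM, ← Matrix.SpecialLinearGroup.coe_mul, inv_mul_cancel,
        Matrix.SpecialLinearGroup.coe_one]
    have hp : p = N 0 0 * A + N 0 1 * B := by
      have h0 : (N * M) 0 0 = 1 := by rw [hNM]; simp
      have h1 : (N * M) 0 1 = 0 := by rw [hNM]; simp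
      rw [Matrix.mul_apply, Fin.sum_univ_two] at h0 h1
      rw [hA, hB]; linear_combination (-p) * h0 + (-q) * h1
    have hq : q = N 1 0 * A + N 1 1 * B := by
      have h0 : (N * M) 1 0 = 0 := by rw [hNM]; simp
      have h1 : (N * M) 1 1 = 1 := by rw [hNM]; simp
      rw [Matrix.mul_apply, Fin.sum_univ_two] at h0 h1
      rw [hA, hB]; linear_combination (-p) * h0 + (-q) * h1
    have hdp : (Int.gcd A B : ℤ) ∣ p := by
      rw [hp]; exact dvd_add ((Int.gcd_dvd_left _ _).mul_left _) ((Int.gcd_dvd_right _ _).mul_left _)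
    have hdq : (Int.gcd A B : ℤ) ∣ q := by
      rw [hq]; exact dvd_add ((Int.gcd_dvd_left _ _).mul_left _) ((Int.gcd_dvd_right _ _).mul_left _)
    have : (Int.gcd A B : ℤ) ∣ (Int.gcd p q : ℤ) := Int.dvd_coe_gcd hdp hdq
    rw [hpq] at this
    exact Nat.dvd_one.mp (Int.ofNat_dvd.mp (by exact_mod_cast this))
  refine ⟨ε * A, ε * B, ?_, ?_, ?_⟩
  · have hε1 : ε = 1 ∨ ε = -1 := by rw [hε]; split <;> simp
    rcases hε1 with h | h <;> rw [h]
    · simpa using hgcdAB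
    · show Int.gcd (-1 * A) (-1 * B) = 1
      rw [neg_one_mul, neg_one_mul]
      show Nat.gcd (-A).natAbs (-B).natAbs = 1
      rw [Int.natAbs_neg, Int.natAbs_neg]
      exact hgcdAB
  · rw [smul_apply', act_apply, smul_apply', smul_apply', _root_.vec_zero, vec_one, toR_apply, toR_apply]
    push_cast [hA]
    rw [← hM]
    linear_combination ((M 0 0 : ℝ) * (p : ℝ) + (M 0 1 : ℝ) * (q : ℝ)) * hsign
  · rw [smul_apply', act_apply, smul_apply', smul_apply', _root_.vec_zero, vec_one, toR_apply, toR_apply]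
    push_cast [hB]
    rw [← hM]
    linear_combination ((M 1 0 : ℝ) * (p : ℝ) + (M 1 1 : ℝ) * (q : ℝ)) * hsign

/-- If `w = t·(p,q)` is a nonzero vector of rational slope (so its period is
`ρ(w) = 1/t² = h(w)²/|w|²`) and `γ ∈ SL(2,ℤ)` has norm at most `T`, then
`|γ·v − w| ≥ D_v(ρ(w))/T`. -/
theorem gap_around_rational (v : E2) (t : ℝ) (ht : t ≠ 0) (p q : ℤ)
    (hpq : Int.gcd p q = 1) (w : E2) (hw : w = t • vec (p : ℝ) (q : ℝ))
    (T : ℝ) (hT : 0 < T) (γ : SL2Z) (hγ : frobNorm (toR γ) ≤ T) :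
    Dv v (1 / t ^ 2) / T ≤ dist (act γ v) w := by
  have hmem : act γ⁻¹ w ∈ P (1 / t ^ 2) := by
    rw [hw]; exact mem_P t ht p q hpq γ⁻¹
  have h2 : Dv v (1 / t ^ 2) ≤ dist v (act γ⁻¹ w) :=
    Metric.infDist_le_dist_of_mem hmem
  have h3 : dist v (act γ⁻¹ w) ≤ frobNorm (toR γ⁻¹) * dist (act γ v) w := by
    calc dist v (act γ⁻¹ w) = dist (act γ⁻¹ (act γ v)) (act γ⁻¹ w) := by rw [act_inv_act]
    _ ≤ frobNorm (toR γ⁻¹) * dist (act γ v) w := dist_act_le _ _ _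
  rw [frob_inv] at h3
  have h4 : frobNorm (toR γ) * dist (act γ v) w ≤ T * dist (act γ v) w :=
    mul_le_mul_of_nonneg_right hγ dist_nonneg
  rw [div_le_iff₀ hT]
  calc Dv v (1 / t ^ 2) ≤ T * dist (act γ v) w := le_trans h2 (le_trans h3 h4)
  _ = dist (act γ v) w * T := mul_comm _ _
end
end
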